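/- Suppose X and Y are (ε, δ)-indistinguishable probability distributions on a common space Ω. Then there exist distributions X', Y', E₁, E₂ on Ω such that X = (1−δ)X' + δE₁, Y = (1−δ)Y' + δE₂, and X', Y' are (ε, 0)-indistinguishable; moreover there exist distributions U, V such that X' = (e^ε/(1+e^ε))U + (1/(1+e^ε))V and Y' = (e^ε/(1+e^ε))V + (1/(1+e^ε))U. -/

import Mathlib

open MeasureTheory

/-- Distributions `μ, ν` are `(ε,δ)`-indistinguishable: for every measurable event `E`,
`μ(E) ≤ e^ε·ν(E) + δ` and `ν(E) ≤ e^ε·μ(E) + δ`. -/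
def Indist {Ω : Type*} [MeasurableSpace Ω] (ε δ : ℝ) (μ ν : Measure Ω) : Prop :=
  ∀ E : Set Ω, MeasurableSet E →
    μ E ≤ ENNReal.ofReal (Real.exp ε) * ν E + ENNReal.ofReal δ ∧
    ν E ≤ ENNReal.ofReal (Real.exp ε) * μ E + ENNReal.ofReal δ

open ENNReal

lemma interp_aux (P Q b : ℝ≥0∞) (hP : P ≠ ∞) (hQb : Q ≤ b) (hbP : b ≤ P) :
    (1 - (P - b) / (P - Q)) * P + (P - b) / (P - Q) * Q = b := by
  rcases eq_or_lt_of_le (hQb.trans hbP) with hPQ | hPQ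
  · have hb : b = P := le_antisymm hbP (hPQ ▸ hQb)
    simp [← hPQ, hb, tsub_self]
  · have hPQ0 : P - Q ≠ 0 := (tsub_pos_of_lt hPQ).ne'
    have hPQt : P - Q ≠ ∞ := ((tsub_le_self).trans_lt (lt_top_iff_ne_top.mpr hP)).ne
    set s := (P - b) / (P - Q) with hs
    have hs1 : s ≤ 1 := ENNReal.div_le_of_le_mul (by rw [one_mul]; exact tsub_le_tsub_left hQb P)
    have hmul : s * (P - Q) = P - b := ENNReal.div_mul_cancel hPQ0 hPQt
    have hPbt : P - b ≠ ∞ := ((tsub_le_self).trans_lt (lt_top_iff_ne_top.mpr hP)).ne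
    rw [← ENNReal.add_right_inj hPbt]
    calc (P - b) + ((1 - s) * P + s * Q)
        = (1 - s) * P + s * Q + s * (P - Q) := by rw [hmul]; ring
      _ = (1 - s) * P + s * (Q + (P - Q)) := by ring
      _ = (1 - s) * P + s * P := by rw [add_tsub_cancel_of_le (hQb.trans hbP)]
      _ = ((1 - s) + s) * P := by ring
      _ = 1 * P := by rw [tsub_add_cancel_of_le hs1]
      _ = P := one_mul P
      _ = (P - b) + b := (tsub_add_cancel_of_le hbP).symm

lemma prob_eq_of_le {Ω : Type*} [MeasurableSpace Ω] (μ' μ : Measure Ω)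
    [IsProbabilityMeasure μ'] [IsProbabilityMeasure μ] (h : μ' ≤ μ) : μ' = μ := by
  ext E hE
  refine le_antisymm (h E) ?_
  have h3 : μ' E + μ' Eᶜ = 1 := by rw [measure_add_measure_compl hE, measure_univ]
  have h4 : μ E + μ Eᶜ = 1 := by rw [measure_add_measure_compl hE, measure_univ]
  have h5 : μ E + μ Eᶜ ≤ μ' E + μ Eᶜ := by
    rw [h4, ← h3]; exact add_le_add_right (h Eᶜ) _
  exact (ENNReal.add_le_add_iff_right (measure_ne_top μ Eᶜ)).mp h5

/-- Decomposition of `(ε,δ)`-indistinguishable distributions (Kairouz–Oh–Viswanath):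
`X = (1−δ)X' + δE₁`, `Y = (1−δ)Y' + δE₂` with `X',Y'` `(ε,0)`-indistinguishable,
and moreover `X' = (e^ε/(1+e^ε))U + (1/(1+e^ε))V`, `Y' = (e^ε/(1+e^ε))V + (1/(1+e^ε))U`. -/
theorem indist_decomposition {Ω : Type*} [MeasurableSpace Ω] (ε δ : ℝ)
    (hε : 0 ≤ ε) (hδ : δ ∈ Set.Ico (0:ℝ) 1)
    (μ ν : Measure Ω) [IsProbabilityMeasure μ] [IsProbabilityMeasure ν]
    (h : Indist ε δ μ ν) :
    ∃ μ' ν' E₁ E₂ : Measure Ω,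
      IsProbabilityMeasure μ' ∧ IsProbabilityMeasure ν' ∧
      IsProbabilityMeasure E₁ ∧ IsProbabilityMeasure E₂ ∧
      μ = ENNReal.ofReal (1 - δ) • μ' + ENNReal.ofReal δ • E₁ ∧
      ν = ENNReal.ofReal (1 - δ) • ν' + ENNReal.ofReal δ • E₂ ∧
      Indist ε 0 μ' ν' ∧
      ∃ U V : Measure Ω, IsProbabilityMeasure U ∧ IsProbabilityMeasure V ∧
        μ' = ENNReal.ofReal (Real.exp ε / (1 + Real.exp ε)) • U
              + ENNReal.ofReal (1 / (1 + Real.exp ε)) • V ∧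
        ν' = ENNReal.ofReal (Real.exp ε / (1 + Real.exp ε)) • V
              + ENNReal.ofReal (1 / (1 + Real.exp ε)) • U := by
  obtain ⟨hδ0, hδ1⟩ := hδ
  set K : ℝ := Real.exp ε with hK_def
  have hK1 : (1:ℝ) ≤ K := Real.one_le_exp hε
  set k : ℝ≥0∞ := ENNReal.ofReal K with hk_def
  have hk1 : 1 ≤ k := by
    rw [hk_def, ← ENNReal.ofReal_one]
    exact ENNReal.ofReal_le_ofReal hK1
  have hk0 : k ≠ 0 := by
    intro h0; rw [h0] at hk1; exact (by norm_num : ¬ ((1:ℝ≥0∞) ≤ 0)) hk1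
  have hktop : k ≠ ∞ := ENNReal.ofReal_ne_top
  set δ' : ℝ≥0∞ := ENNReal.ofReal δ with hδ'_def
  have hδ'1 : δ' < 1 := by
    rw [hδ'_def, ← ENNReal.ofReal_one]
    exact (ENNReal.ofReal_lt_ofReal_iff (by norm_num)).mpr hδ1
  have hofsub : ENNReal.ofReal (1 - δ) = 1 - δ' := by
    rw [hδ'_def, ← ENNReal.ofReal_one, ← ENNReal.ofReal_sub _ hδ0]
  set lam : Measure Ω := μ + ν with hlam_def
  haveI : IsFiniteMeasure lam := by rw [hlam_def]; infer_instance
  have hμac : μ ≪ lam := Measure.absolutelyContinuous_of_le (Measure.le_add_right le_rfl)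
  have hνac : ν ≪ lam := Measure.absolutelyContinuous_of_le (Measure.le_add_left le_rfl)
  set f : Ω → ℝ≥0∞ := μ.rnDeriv lam with hf_def
  set g : Ω → ℝ≥0∞ := ν.rnDeriv lam with hg_def
  have hfm : Measurable f := Measure.measurable_rnDeriv μ lam
  have hgm : Measurable g := Measure.measurable_rnDeriv ν lam
  have hμf : lam.withDensity f = μ := Measure.withDensity_rnDeriv_eq μ lam hμac
  have hνg : lam.withDensity g = ν := Measure.withDensity_rnDeriv_eq ν lam hνac
  set m : Ω → ℝ≥0∞ := fun x => min (f x) (k * g x) with hm_def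
  set n : Ω → ℝ≥0∞ := fun x => min (g x) (k * f x) with hn_def
  have hmm : Measurable m := hfm.min (hgm.const_mul k)
  have hnm : Measurable n := hgm.min (hfm.const_mul k)
  have hmf : ∀ x, m x ≤ f x := fun x => min_le_left _ _
  have hng : ∀ x, n x ≤ g x := fun x => min_le_left _ _
  have key_dom : ∀ (a b : ℝ≥0∞), min b (k * a) ≤ k * min a (k * b) := by
    intro a b
    rcases le_total a (k * b) with hab | hab
    · rw [min_eq_left hab]; exact min_le_right _ _
    · rw [min_eq_right hab]
      exact le_trans (min_le_left _ _) (by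
        calc b = 1 * (1 * b) := by rw [one_mul, one_mul]
          _ ≤ k * (k * b) := mul_le_mul' hk1 (mul_le_mul' hk1 le_rfl))
  have hnkm : ∀ x, n x ≤ k * m x := fun x => key_dom (f x) (g x)
  have hmkn : ∀ x, m x ≤ k * n x := fun x => key_dom (g x) (f x)
  have hIff : ∫⁻ x, f x ∂lam = 1 := by
    have := hμf
    calc ∫⁻ x, f x ∂lam = lam.withDensity f Set.univ := by
          rw [withDensity_apply _ MeasurableSet.univ, setLIntegral_univ]
      _ = μ Set.univ := by rw [hμf]
      _ = 1 := measure_univ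
  have hIgg : ∫⁻ x, g x ∂lam = 1 := by
    calc ∫⁻ x, g x ∂lam = lam.withDensity g Set.univ := by
          rw [withDensity_apply _ MeasurableSet.univ, setLIntegral_univ]
      _ = ν Set.univ := by rw [hνg]
      _ = 1 := measure_univ
  set Im := ∫⁻ x, m x ∂lam with hIm_def
  set In := ∫⁻ x, n x ∂lam with hIn_def
  have hIm1 : Im ≤ 1 := by
    rw [hIm_def, ← hIff]; exact lintegral_mono (fun x => hmf x)
  have hIn1 : In ≤ 1 := by
    rw [hIn_def, ← hIgg]; exact lintegral_mono (fun x => hng x)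
  have hImtop : Im ≠ ∞ := (hIm1.trans_lt one_lt_top).ne
  have hIntop : In ≠ ∞ := (hIn1.trans_lt one_lt_top).ne
  -- key lower bound via indistinguishability
  have key_lb : ∀ (μ₁ ν₁ : Measure Ω) (f₁ g₁ : Ω → ℝ≥0∞), Measurable f₁ → Measurable g₁ →
      lam.withDensity f₁ = μ₁ → lam.withDensity g₁ = ν₁ → μ₁ Set.univ = 1 →
      (∀ E, MeasurableSet E → μ₁ E ≤ k * ν₁ E + δ') →
      1 - δ' ≤ ∫⁻ x, min (f₁ x) (k * g₁ x) ∂lam := by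
    intro μ₁ ν₁ f₁ g₁ hf₁ hg₁ hμ₁ hν₁ huniv hind
    set A := {x | k * g₁ x < f₁ x} with hA_def
    have hA : MeasurableSet A := measurableSet_lt (hg₁.const_mul k) hf₁
    have h1 : ∫⁻ x in A, f₁ x ∂lam = μ₁ A := by rw [← hμ₁, withDensity_apply _ hA]
    have h2 : ∫⁻ x in A, k * g₁ x ∂lam = k * ν₁ A := by
      rw [lintegral_const_mul k hg₁, ← hν₁, withDensity_apply _ hA]
    have h3 : ∫⁻ x in A, min (f₁ x) (k * g₁ x) ∂lam = ∫⁻ x in A, k * g₁ x ∂lam :=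
      setLIntegral_congr_fun hA (fun x hx => min_eq_right (le_of_lt hx))
    have h4 : ∫⁻ x in Aᶜ, min (f₁ x) (k * g₁ x) ∂lam = ∫⁻ x in Aᶜ, f₁ x ∂lam :=
      setLIntegral_congr_fun hA.compl (fun x hx => min_eq_left (not_lt.mp hx))
    rw [tsub_le_iff_right]
    calc (1:ℝ≥0∞) = μ₁ Set.univ := huniv.symm
      _ = ∫⁻ x, f₁ x ∂lam := by
          rw [← hμ₁, withDensity_apply _ MeasurableSet.univ, setLIntegral_univ]
      _ = ∫⁻ x in A, f₁ x ∂lam + ∫⁻ x in Aᶜ, f₁ x ∂lam := (lintegral_add_compl _ hA).symm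
      _ = μ₁ A + ∫⁻ x in Aᶜ, f₁ x ∂lam := by rw [h1]
      _ ≤ (k * ν₁ A + δ') + ∫⁻ x in Aᶜ, f₁ x ∂lam := add_le_add_left (hind A hA) _
      _ = (∫⁻ x in A, min (f₁ x) (k * g₁ x) ∂lam
            + ∫⁻ x in Aᶜ, min (f₁ x) (k * g₁ x) ∂lam) + δ' := by
          rw [h3, h4, h2]; ring
      _ = ∫⁻ x, min (f₁ x) (k * g₁ x) ∂lam + δ' := by rw [lintegral_add_compl _ hA]
  have hImlb : 1 - δ' ≤ Im := by
    rw [hIm_def, hm_def]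
    exact key_lb μ ν f g hfm hgm hμf hνg measure_univ (fun E hE => (h E hE).1)
  have hInlb : 1 - δ' ≤ In := by
    rw [hIn_def, hn_def]
    exact key_lb ν μ g f hgm hfm hνg hμf measure_univ (fun E hE => (h E hE).2)
  set β := min Im In with hβ_def
  have hβIm : β ≤ Im := min_le_left _ _
  have hβIn : β ≤ In := min_le_right _ _
  have hβ1 : β ≤ 1 := hβIm.trans hIm1
  have hβtop : β ≠ ∞ := (hβ1.trans_lt one_lt_top).ne
  have hβlb : 1 - δ' ≤ β := le_min hImlb hInlb
  have hβ0 : β ≠ 0 := ((tsub_pos_of_lt hδ'1).trans_le hβlb).ne'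
  have hkinv1 : k⁻¹ ≤ 1 := ENNReal.inv_le_one.mpr hk1
  have hkk : k⁻¹ * k = 1 := ENNReal.inv_mul_cancel hk0 hktop
  have hInkIm : In ≤ k * Im := by
    rw [hIn_def, hIm_def, ← lintegral_const_mul k hmm]
    exact lintegral_mono (fun x => hnkm x)
  have hImkIn : Im ≤ k * In := by
    rw [hIn_def, hIm_def, ← lintegral_const_mul k hnm]
    exact lintegral_mono (fun x => hmkn x)
  have hQ1β : k⁻¹ * In ≤ β := by
    refine le_min ?_ ?_
    · calc k⁻¹ * In ≤ k⁻¹ * (k * Im) := mul_le_mul_right hInkIm _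
        _ = (k⁻¹ * k) * Im := (mul_assoc _ _ _).symm
        _ = Im := by rw [hkk, one_mul]
    · calc k⁻¹ * In ≤ 1 * In := mul_le_mul_left hkinv1 _
        _ = In := one_mul _
  have hQ2β : k⁻¹ * Im ≤ β := by
    refine le_min ?_ ?_
    · calc k⁻¹ * Im ≤ 1 * Im := mul_le_mul_left hkinv1 _
        _ = Im := one_mul _
    · calc k⁻¹ * Im ≤ k⁻¹ * (k * In) := mul_le_mul_right hImkIn _
        _ = (k⁻¹ * k) * In := (mul_assoc _ _ _).symm
        _ = In := by rw [hkk, one_mul]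
  set s := (Im - β) / (Im - k⁻¹ * In) with hs_def
  set t := (In - β) / (In - k⁻¹ * Im) with ht_def
  have hs1 : s ≤ 1 := ENNReal.div_le_of_le_mul
    (by rw [one_mul]; exact tsub_le_tsub_left hQ1β Im)
  have ht1 : t ≤ 1 := ENNReal.div_le_of_le_mul
    (by rw [one_mul]; exact tsub_le_tsub_left hQ2β In)
  set m1 : Ω → ℝ≥0∞ := fun x => (1 - s) * m x + s * (k⁻¹ * n x) with hm1_def
  set n1 : Ω → ℝ≥0∞ := fun x => (1 - t) * n x + t * (k⁻¹ * m x) with hn1_def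
  have hm1meas : Measurable m1 := (hmm.const_mul _).add ((hnm.const_mul _).const_mul _)
  have hn1meas : Measurable n1 := (hnm.const_mul _).add ((hmm.const_mul _).const_mul _)
  have hinvn : ∀ x, k⁻¹ * n x ≤ m x := by
    intro x
    calc k⁻¹ * n x ≤ k⁻¹ * (k * m x) := mul_le_mul_right (hnkm x) _
      _ = (k⁻¹ * k) * m x := (mul_assoc _ _ _).symm
      _ = m x := by rw [hkk, one_mul]
  have hinvm : ∀ x, k⁻¹ * m x ≤ n x := by
    intro x
    calc k⁻¹ * m x ≤ k⁻¹ * (k * n x) := mul_le_mul_right (hmkn x) _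
      _ = (k⁻¹ * k) * n x := (mul_assoc _ _ _).symm
      _ = n x := by rw [hkk, one_mul]
  have hm1m : ∀ x, m1 x ≤ m x := by
    intro x
    calc m1 x ≤ (1 - s) * m x + s * m x := add_le_add_right (mul_le_mul_right (hinvn x) _) _
      _ = ((1 - s) + s) * m x := by ring
      _ = m x := by rw [tsub_add_cancel_of_le hs1, one_mul]
  have hn1n : ∀ x, n1 x ≤ n x := by
    intro x
    calc n1 x ≤ (1 - t) * n x + t * n x := add_le_add_right (mul_le_mul_right (hinvm x) _) _
      _ = ((1 - t) + t) * n x := by ring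
      _ = n x := by rw [tsub_add_cancel_of_le ht1, one_mul]
  have hnkm1 : ∀ x, n x ≤ k * m1 x := by
    intro x
    have hcan : k * (k⁻¹ * n x) = n x := by rw [← mul_assoc, ENNReal.mul_inv_cancel hk0 hktop, one_mul]
    have hexp : k * m1 x = (1 - s) * (k * m x) + s * (k * (k⁻¹ * n x)) := by
      rw [hm1_def]; ring
    rw [hexp, hcan]
    calc n x = ((1 - s) + s) * n x := by rw [tsub_add_cancel_of_le hs1, one_mul]
      _ = (1 - s) * n x + s * n x := by ring
      _ ≤ (1 - s) * (k * m x) + s * n x := add_le_add_left (mul_le_mul_right (hnkm x) _) _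
  have hmkn1 : ∀ x, m x ≤ k * n1 x := by
    intro x
    have hcan : k * (k⁻¹ * m x) = m x := by rw [← mul_assoc, ENNReal.mul_inv_cancel hk0 hktop, one_mul]
    have hexp : k * n1 x = (1 - t) * (k * n x) + t * (k * (k⁻¹ * m x)) := by
      rw [hn1_def]; ring
    rw [hexp, hcan]
    calc m x = ((1 - t) + t) * m x := by rw [tsub_add_cancel_of_le ht1, one_mul]
      _ = (1 - t) * m x + t * m x := by ring
      _ ≤ (1 - t) * (k * n x) + t * m x := add_le_add_left (mul_le_mul_right (hmkn x) _) _
  have hn1km1 : ∀ x, n1 x ≤ k * m1 x := fun x => (hn1n x).trans (hnkm1 x)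
  have hm1kn1 : ∀ x, m1 x ≤ k * n1 x := fun x => (hm1m x).trans (hmkn1 x)
  have hIm1β : ∫⁻ x, m1 x ∂lam = β := by
    rw [hm1_def]
    rw [lintegral_add_left (hmm.const_mul _)]
    rw [lintegral_const_mul _ hmm, lintegral_const_mul _ (hnm.const_mul _),
      lintegral_const_mul _ hnm]
    exact interp_aux Im (k⁻¹ * In) β hImtop hQ1β hβIm
  have hIn1β : ∫⁻ x, n1 x ∂lam = β := by
    rw [hn1_def]
    rw [lintegral_add_left (hnm.const_mul _)]
    rw [lintegral_const_mul _ hnm, lintegral_const_mul _ (hmm.const_mul _),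
      lintegral_const_mul _ hmm]
    exact interp_aux In (k⁻¹ * Im) β hIntop hQ2β hβIn
  -- the normalized measures
  set Mu' : Measure Ω := β⁻¹ • lam.withDensity m1 with hMu'_def
  set Nu' : Measure Ω := β⁻¹ • lam.withDensity n1 with hNu'_def
  have hwduniv : ∀ (p : Ω → ℝ≥0∞), (∫⁻ x, p x ∂lam = β) → lam.withDensity p Set.univ = β := by
    intro p hp
    rw [withDensity_apply _ MeasurableSet.univ, setLIntegral_univ, hp]
  haveI hMu'p : IsProbabilityMeasure Mu' := by
    constructor
    rw [hMu'_def, Measure.smul_apply, smul_eq_mul, hwduniv m1 hIm1β]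
    exact ENNReal.inv_mul_cancel hβ0 hβtop
  haveI hNu'p : IsProbabilityMeasure Nu' := by
    constructor
    rw [hNu'_def, Measure.smul_apply, smul_eq_mul, hwduniv n1 hIn1β]
    exact ENNReal.inv_mul_cancel hβ0 hβtop
  -- first-level decomposition
  have hc1 : (1 - δ') * β⁻¹ ≤ 1 := by
    calc (1 - δ') * β⁻¹ ≤ β * β⁻¹ := mul_le_mul_left hβlb _
      _ = 1 := ENNReal.mul_inv_cancel hβ0 hβtop
  have hEx : ∀ (μ₀ : Measure Ω) (f₀ m₀ : Ω → ℝ≥0∞), IsProbabilityMeasure μ₀ →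
      Measurable f₀ → Measurable m₀ →
      lam.withDensity f₀ = μ₀ → (∀ x, m₀ x ≤ f₀ x) → (∫⁻ x, m₀ x ∂lam = β) →
      ∃ E₀ : Measure Ω, IsProbabilityMeasure E₀ ∧
        μ₀ = ENNReal.ofReal (1 - δ) • (β⁻¹ • lam.withDensity m₀) + ENNReal.ofReal δ • E₀ := by
    intro μ₀ f₀ m₀ hp hf₀ hm₀ hwd hle hint
    haveI := hp
    haveI hpr : IsProbabilityMeasure (β⁻¹ • lam.withDensity m₀) := by
      constructor
      rw [Measure.smul_apply, smul_eq_mul, hwduniv m₀ hint]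
      exact ENNReal.inv_mul_cancel hβ0 hβtop
    have hIf₀ : ∫⁻ x, f₀ x ∂lam = 1 := by
      calc ∫⁻ x, f₀ x ∂lam = lam.withDensity f₀ Set.univ := by
            rw [withDensity_apply _ MeasurableSet.univ, setLIntegral_univ]
        _ = μ₀ Set.univ := by rw [hwd]
        _ = 1 := measure_univ
    rcases eq_or_lt_of_le hδ0 with hδz | hδpos
    · refine ⟨μ₀, hp, ?_⟩
      rw [← hδz]
      simp only [sub_zero, ENNReal.ofReal_one, one_smul, ENNReal.ofReal_zero, zero_smul, add_zero]
      have hδ'z : δ' = 0 := by rw [hδ'_def, ← hδz, ENNReal.ofReal_zero]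
      have hβeq : β = 1 := le_antisymm hβ1 (by rw [hδ'z, tsub_zero] at hβlb; exact hβlb)
      have hle' : β⁻¹ • lam.withDensity m₀ ≤ μ₀ := by
        rw [hβeq, inv_one, one_smul, ← hwd]
        exact withDensity_mono (Filter.Eventually.of_forall hle)
      exact (prob_eq_of_le _ _ hle').symm
    · have hδ'0 : δ' ≠ 0 := by
        rw [hδ'_def]; exact (ENNReal.ofReal_pos.mpr hδpos).ne'
      have hδ't : δ' ≠ ∞ := by rw [hδ'_def]; exact ENNReal.ofReal_ne_top
      set c := (1 - δ') * β⁻¹ with hc_def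
      set e := fun x => f₀ x - c * m₀ x with he_def
      have hem : Measurable e := hf₀.sub (hm₀.const_mul c)
      have hcm : ∀ x, c * m₀ x ≤ f₀ x := by
        intro x
        calc c * m₀ x ≤ 1 * m₀ x := mul_le_mul_left hc1 _
          _ = m₀ x := one_mul _
          _ ≤ f₀ x := hle x
      have hIcm : ∫⁻ x, c * m₀ x ∂lam = 1 - δ' := by
        rw [lintegral_const_mul c hm₀, hint, hc_def, mul_assoc,
          ENNReal.inv_mul_cancel hβ0 hβtop, mul_one]
      have hIe : ∫⁻ x, e x ∂lam = δ' := by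
        rw [he_def, lintegral_sub (hm₀.const_mul c)
          (by rw [hIcm]; exact (tsub_le_self.trans_lt one_lt_top).ne)
          (Filter.Eventually.of_forall hcm), hIf₀, hIcm,
          ENNReal.sub_sub_cancel one_ne_top hδ'1.le]
      refine ⟨δ'⁻¹ • lam.withDensity e, ?_, ?_⟩
      · constructor
        rw [Measure.smul_apply, smul_eq_mul, withDensity_apply _ MeasurableSet.univ,
          setLIntegral_univ, hIe]
        exact ENNReal.inv_mul_cancel hδ'0 hδ't
      · rw [hofsub]
        have h1 : (1 - δ') • (β⁻¹ • lam.withDensity m₀) = lam.withDensity (fun x => c * m₀ x) := by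
          rw [smul_smul, ← hc_def, ← withDensity_smul c hm₀]; rfl
        have h2 : δ' • (δ'⁻¹ • lam.withDensity e) = lam.withDensity e := by
          rw [smul_smul, ENNReal.mul_inv_cancel hδ'0 hδ't, one_smul]
        have h3 : (fun x => c * m₀ x + e x) = f₀ := by
          funext x; rw [he_def]; exact add_tsub_cancel_of_le (hcm x)
        rw [hδ'_def] at h2 ⊢
        rw [h1, h2, ← withDensity_add_left (hm₀.const_mul c) e]
        rw [show (fun x => c * m₀ x) + e = fun x => c * m₀ x + e x from rfl, h3, hwd]
  obtain ⟨E₁, hE₁p, hE₁eq⟩ := hEx μ f m1 inferInstance hfm hm1meas hμf (fun x => (hm1m x).trans (hmf x)) hIm1β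
  obtain ⟨E₂, hE₂p, hE₂eq⟩ := hEx ν g n1 inferInstance hgm hn1meas hνg (fun x => (hn1n x).trans (hng x)) hIn1β
  -- Indist ε 0
  have hdom_meas : ∀ (p q : Ω → ℝ≥0∞), Measurable q → (∀ x, p x ≤ k * q x) →
      ∀ E : Set Ω, MeasurableSet E →
      (β⁻¹ • lam.withDensity p) E ≤ k * ((β⁻¹ • lam.withDensity q) E) := by
    intro p q hqm hpq E hE
    rw [Measure.smul_apply, Measure.smul_apply, smul_eq_mul, smul_eq_mul,
      withDensity_apply _ hE, withDensity_apply _ hE]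
    calc β⁻¹ * ∫⁻ x in E, p x ∂lam ≤ β⁻¹ * ∫⁻ x in E, k * q x ∂lam :=
          mul_le_mul_right (lintegral_mono fun x => hpq x) _
      _ = β⁻¹ * (k * ∫⁻ x in E, q x ∂lam) := by rw [lintegral_const_mul k hqm]
      _ = k * (β⁻¹ * ∫⁻ x in E, q x ∂lam) := by ring
  have hInd : Indist ε 0 Mu' Nu' := by
    intro E hE
    simp only [ENNReal.ofReal_zero, add_zero]
    constructor
    · rw [hMu'_def, hNu'_def, ← hK_def, ← hk_def]
      exact hdom_meas m1 n1 hn1meas hm1kn1 E hE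
    · rw [hMu'_def, hNu'_def, ← hK_def, ← hk_def]
      exact hdom_meas n1 m1 hm1meas hn1km1 E hE
  refine ⟨Mu', Nu', E₁, E₂, hMu'p, hNu'p, hE₁p, hE₂p, hE₁eq, hE₂eq, hInd, ?_⟩
  -- the U, V decomposition
  rcases eq_or_lt_of_le hε with hε0 | hεpos
  · -- ε = 0
    have hK1' : K = 1 := by rw [hK_def, ← hε0, Real.exp_zero]
    have hkone : k = 1 := by rw [hk_def, hK1', ENNReal.ofReal_one]
    have hmn : m = n := by
      funext x
      rw [hm_def, hn_def]
      simp only [hkone, one_mul]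
      exact min_comm _ _
    have hImIn : Im = In := by rw [hIm_def, hIn_def, hmn]
    have hst : s = t := by rw [hs_def, ht_def, hImIn]
    have hm1n1 : m1 = n1 := by
      funext x; rw [hm1_def, hn1_def, hmn, hst]
    have hMuNu : Mu' = Nu' := by rw [hMu'_def, hNu'_def, hm1n1]
    have hhalf : ENNReal.ofReal (K / (1 + K)) = ENNReal.ofReal (1 / (1 + K)) := by
      rw [hK1']
    have hsum : ENNReal.ofReal (K / (1 + K)) + ENNReal.ofReal (1 / (1 + K)) = 1 := by
      rw [hK1', ← ENNReal.ofReal_add (by norm_num) (by norm_num)]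
      norm_num
    refine ⟨Mu', Mu', hMu'p, hMu'p, ?_, ?_⟩
    · rw [← add_smul, hsum, one_smul]
    · rw [hMuNu, ← add_smul, hsum, one_smul]
  · -- ε > 0
    have hK1lt : (1:ℝ) < K := by
      rw [hK_def, ← Real.exp_zero]
      exact Real.exp_lt_exp.mpr hεpos
    have hklt : 1 < k := by
      rw [hk_def, ← ENNReal.ofReal_one]
      exact (ENNReal.ofReal_lt_ofReal_iff (lt_trans one_pos hK1lt)).mpr hK1lt
    set D := k - 1 with hD_def
    have hD0 : D ≠ 0 := (tsub_pos_of_lt hklt).ne'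
    have hDtop : D ≠ ∞ := (tsub_le_self.trans_lt (lt_top_iff_ne_top.mpr hktop)).ne
    have h1k0 : (1 + k) ≠ 0 := by simp
    have h1ktop : (1 + k) ≠ ∞ := by
      rw [ENNReal.add_ne_top]; exact ⟨one_ne_top, hktop⟩
    have h1K : (0:ℝ) < 1 + K := by linarith
    have hq'k : ENNReal.ofReal (K / (1 + K)) = k * (1 + k)⁻¹ := by
      rw [ENNReal.ofReal_div_of_pos h1K, hk_def, div_eq_mul_inv,
        ENNReal.ofReal_add (by norm_num) (by linarith), ENNReal.ofReal_one]
    have hp'k : ENNReal.ofReal (1 / (1 + K)) = 1 * (1 + k)⁻¹ := by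
      rw [ENNReal.ofReal_div_of_pos h1K, hk_def, div_eq_mul_inv,
        ENNReal.ofReal_add (by norm_num) (by linarith), ENNReal.ofReal_one]
    have hfact : (1 + k) * D = k * k - 1 := by
      rw [hD_def, hk_def, ← ENNReal.ofReal_one,
        ← ENNReal.ofReal_sub K (by norm_num : (0:ℝ) ≤ 1),
        ← ENNReal.ofReal_add (by norm_num : (0:ℝ) ≤ 1) (by linarith : (0:ℝ) ≤ K),
        ← ENNReal.ofReal_mul (by linarith : (0:ℝ) ≤ 1 + K),
        ← ENNReal.ofReal_mul (by linarith : (0:ℝ) ≤ K),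
        ← ENNReal.ofReal_sub (K * K) (by norm_num : (0:ℝ) ≤ 1)]
      congr 1
      ring
    have key : ∀ a b : ℝ≥0∞, a ≠ ∞ → b ≤ k * a → a ≤ k * b →
        ENNReal.ofReal (K / (1 + K)) * (D⁻¹ * (k * a - b))
          + ENNReal.ofReal (1 / (1 + K)) * (D⁻¹ * (k * b - a)) = a := by
      intro a b ha hba hab
      have e1 : k * (k * a - b) = k * k * a - k * b := by
        rw [ENNReal.mul_sub (fun _ _ => hktop), mul_assoc]
      have e2 : (k * k * a - k * b) + (k * b - a) = k * k * a - a := by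
        refine tsub_add_tsub_cancel ?_ hab
        calc k * b ≤ k * (k * a) := mul_le_mul_right hba k
          _ = k * k * a := (mul_assoc _ _ _).symm
      have e3 : k * k * a - a = ((1 + k) * D) * a := by
        rw [hfact, ENNReal.sub_mul (fun _ _ => ha), one_mul]
      calc ENNReal.ofReal (K / (1 + K)) * (D⁻¹ * (k * a - b))
            + ENNReal.ofReal (1 / (1 + K)) * (D⁻¹ * (k * b - a))
          = ((1 + k)⁻¹ * D⁻¹) * (k * (k * a - b)) + ((1 + k)⁻¹ * D⁻¹) * (k * b - a) := by
            rw [hq'k, hp'k]; ring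
        _ = ((1 + k)⁻¹ * D⁻¹) * ((k * k * a - k * b) + (k * b - a)) := by
            rw [e1, mul_add]
        _ = ((1 + k)⁻¹ * D⁻¹) * ((1 + k) * D * a) := by rw [e2, e3]
        _ = (((1 + k)⁻¹ * (1 + k)) * (D⁻¹ * D)) * a := by ring
        _ = a := by
            rw [ENNReal.inv_mul_cancel h1k0 h1ktop, ENNReal.inv_mul_cancel hD0 hDtop,
              one_mul, one_mul]
    set ud : Ω → ℝ≥0∞ := fun x => D⁻¹ * (k * m1 x - n1 x) with hud_def
    set vd : Ω → ℝ≥0∞ := fun x => D⁻¹ * (k * n1 x - m1 x) with hvd_def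
    have hudm : Measurable ud := ((hm1meas.const_mul k).sub hn1meas).const_mul D⁻¹
    have hvdm : Measurable vd := ((hn1meas.const_mul k).sub hm1meas).const_mul D⁻¹
    have hDmulβ : D⁻¹ * (k * β - β) = β := by
      have hsub : k * β - β = D * β := by
        rw [hD_def, ENNReal.sub_mul (fun _ _ => hβtop), one_mul]
      rw [hsub, ← mul_assoc, ENNReal.inv_mul_cancel hD0 hDtop, one_mul]
    have hIud : ∫⁻ x, ud x ∂lam = β := by
      rw [hud_def, lintegral_const_mul _ (f := fun x => k * m1 x - n1 x) ((hm1meas.const_mul k).sub hn1meas),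
        lintegral_sub hn1meas (by rw [hIn1β]; exact hβtop)
          (Filter.Eventually.of_forall hn1km1),
        lintegral_const_mul k hm1meas, hIm1β, hIn1β, hDmulβ]
    have hIvd : ∫⁻ x, vd x ∂lam = β := by
      rw [hvd_def, lintegral_const_mul _ (f := fun x => k * n1 x - m1 x) ((hn1meas.const_mul k).sub hm1meas),
        lintegral_sub hm1meas (by rw [hIm1β]; exact hβtop)
          (Filter.Eventually.of_forall hm1kn1),
        lintegral_const_mul k hn1meas, hIm1β, hIn1β, hDmulβ]
    have hsm : ∀ (c : ℝ≥0∞) (p : Ω → ℝ≥0∞), Measurable p →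
        c • lam.withDensity p = lam.withDensity fun x => c * p x := by
      intro c p hp; rw [← withDensity_smul c hp]; rfl
    refine ⟨β⁻¹ • lam.withDensity ud, β⁻¹ • lam.withDensity vd, ?_, ?_, ?_, ?_⟩
    · constructor
      rw [Measure.smul_apply, smul_eq_mul, hwduniv ud hIud]
      exact ENNReal.inv_mul_cancel hβ0 hβtop
    · constructor
      rw [Measure.smul_apply, smul_eq_mul, hwduniv vd hIvd]
      exact ENNReal.inv_mul_cancel hβ0 hβtop
    · -- Mu' = q' • U + p' • V
      rw [hMu'_def]
      rw [smul_comm (ENNReal.ofReal (K / (1 + K))) β⁻¹, smul_comm (ENNReal.ofReal (1 / (1 + K))) β⁻¹]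
      rw [← smul_add]
      congr 1
      rw [hsm _ ud hudm, hsm _ vd hvdm, ← withDensity_add_left (hudm.const_mul _)]
      apply withDensity_congr_ae
      filter_upwards [Measure.rnDeriv_lt_top μ lam] with x hfx
      have ham : m1 x ≠ ∞ := (((hm1m x).trans (hmf x)).trans_lt hfx).ne
      exact (key (m1 x) (n1 x) ham (hn1km1 x) (hm1kn1 x)).symm
    · -- Nu' = q' • V + p' • U
      rw [hNu'_def]
      rw [smul_comm (ENNReal.ofReal (K / (1 + K))) β⁻¹, smul_comm (ENNReal.ofReal (1 / (1 + K))) β⁻¹]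
      rw [← smul_add]
      congr 1
      rw [hsm _ vd hvdm, hsm _ ud hudm, ← withDensity_add_left (hvdm.const_mul _)]
      apply withDensity_congr_ae
      filter_upwards [Measure.rnDeriv_lt_top ν lam] with x hgx
      have han : n1 x ≠ ∞ := (((hn1n x).trans (hng x)).trans_lt hgx).ne
      exact (key (n1 x) (m1 x) han (hm1kn1 x) (hn1km1 x)).symm
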